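/- arXiv:1809.07566 — 3 statements merged into one kernel-verified Lean document; each statement's English description precedes it below -/
import Mathlib

section
/- The set {z_w : w ∈ V} is dense in V, where z_w denotes the Riesz representative of w (regarded as an element of V' via the L² pairing). -/
open MeasureTheory Set intervalIntegral
open scoped ENNReal

private lemma sqrtIntSq_eq {μ : Measure ℝ} {h : ℝ → ℝ} (hh : MemLp h 2 μ) :
    Real.sqrt (∫ x, h x ^ 2 ∂μ) = (eLpNorm h 2 μ).toReal := by
  rw [hh.eLpNorm_eq_integral_rpow_norm two_ne_zero ENNReal.ofNat_ne_top,
    ENNReal.toReal_ofReal (by positivity)]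
  have h2 : ∀ a : ℝ, ‖h a‖ ^ (2 : ℝ≥0∞).toReal = h a ^ 2 := by
    intro a
    rw [ENNReal.toReal_ofNat, Real.rpow_two, Real.norm_eq_abs, sq_abs]
  simp_rw [h2]
  rw [Real.sqrt_eq_rpow]
  norm_num

private lemma sqrtIntSq_add_le {μ : Measure ℝ} {f g : ℝ → ℝ}
    (hf : MemLp f 2 μ) (hg : MemLp g 2 μ) :
    Real.sqrt (∫ x, (f x + g x) ^ 2 ∂μ) ≤
      Real.sqrt (∫ x, f x ^ 2 ∂μ) + Real.sqrt (∫ x, g x ^ 2 ∂μ) := by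
  have hfg : MemLp (fun x => f x + g x) 2 μ := hf.add hg
  rw [sqrtIntSq_eq hfg, sqrtIntSq_eq hf, sqrtIntSq_eq hg]
  rw [← ENNReal.toReal_add hf.2.ne hg.2.ne]
  refine ENNReal.toReal_mono (ENNReal.add_ne_top.2 ⟨hf.2.ne, hg.2.ne⟩) ?_
  exact eLpNorm_add_le hf.aestronglyMeasurable hg.aestronglyMeasurable one_le_two

private lemma cont_memLp (L : ℝ) {k : ℝ → ℝ} (hk : Continuous k) :
    MemLp k 2 (volume.restrict (Ioc 0 L)) :=
  (memLp_two_iff_integrable_sq hk.aestronglyMeasurable.restrict).2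
    ((hk.pow 2).integrableOn_Ioc)

set_option maxHeartbeats 2000000 in
/-- Density of `{z_w : w ∈ V}` in `V`: for every `ψ ∈ V` and `ε > 0` there exists
`w ∈ V` whose Riesz representative `z_w` (characterized by `z_w(0) = 0` and
`z_w'(x) = ∫ₓᴸ w`) satisfies `‖z_w − ψ‖_V < ε`. -/
theorem density_of_riesz_representatives (L : ℝ) (hL : 0 < L)
    (ψ ψ' : ℝ → ℝ)
    (hψ : ∀ x ∈ Set.Icc (0:ℝ) L, HasDerivWithinAt ψ (ψ' x) (Set.Icc 0 L) x)
    (hψ0 : ψ 0 = 0)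
    (hψ2 : IntervalIntegrable (fun x => (ψ' x) ^ 2) volume 0 L)
    (ε : ℝ) (hε : 0 < ε) :
    ∃ w w' : ℝ → ℝ,
      (∀ x ∈ Set.Icc (0:ℝ) L, HasDerivWithinAt w (w' x) (Set.Icc 0 L) x) ∧
      w 0 = 0 ∧
      IntervalIntegrable (fun x => (w' x) ^ 2) volume 0 L ∧
      Real.sqrt (∫ x in (0:ℝ)..L, ((∫ t in x..L, w t) - ψ' x) ^ 2) < ε := by
  have hμfin : IsFiniteMeasure (volume.restrict (Ioc (0:ℝ) L)) :=
    ⟨by rw [Measure.restrict_apply_univ]; exact measure_Ioc_lt_top⟩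
  -- ψ' is in L²
  have hψ'mem : MemLp ψ' 2 (volume.restrict (Ioc (0:ℝ) L)) := by
    have hmeas : AEStronglyMeasurable ψ' (volume.restrict (Ioc (0:ℝ) L)) := by
      have h1 : ∀ᵐ x ∂(volume.restrict (Ioc (0:ℝ) L)), x ∈ Ioo (0:ℝ) L := by
        have h2 : ∀ᵐ x ∂(volume.restrict (Ioc (0:ℝ) L)), x ∈ Ioc (0:ℝ) L :=
          ae_restrict_mem measurableSet_Ioc
        have h3 : ∀ᵐ (x : ℝ) ∂(volume.restrict (Ioc (0:ℝ) L)), x ≠ L := by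
          refine ae_mono Measure.restrict_le_self ?_
          exact compl_mem_ae_iff.2 (measure_singleton L)
        filter_upwards [h2, h3] with x hx hx'
        exact ⟨hx.1, lt_of_le_of_ne hx.2 hx'⟩
      refine (stronglyMeasurable_derivWithin_Ioi ψ).aestronglyMeasurable.congr ?_
      filter_upwards [h1] with x hx
      have hD : HasDerivWithinAt ψ (ψ' x) (Ioi x) x := by
        refine (hψ x ⟨hx.1.le, hx.2.le⟩).mono_of_mem_nhdsWithin ?_
        have hmem : Ioi x ∩ Iio L ∈ nhdsWithin x (Ioi x) :=
          inter_mem_nhdsWithin _ (Iio_mem_nhds hx.2)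
        refine Filter.mem_of_superset hmem ?_
        rintro y ⟨hy1, hy2⟩
        exact ⟨(hx.1.trans hy1).le, hy2.le⟩
      exact hD.derivWithin (uniqueDiffWithinAt_Ioi x)
    exact (memLp_two_iff_integrable_sq hmeas).2 hψ2.1
  -- approximate by a continuous function
  have hψind : MemLp ((Ioc (0:ℝ) L).indicator ψ') 2 (volume : Measure ℝ) :=
    (memLp_indicator_iff_restrict measurableSet_Ioc).2 hψ'mem
  obtain ⟨f, -, hfe, hfc, hfm⟩ :=
    hψind.exists_hasCompactSupport_eLpNorm_sub_le ENNReal.ofNat_ne_top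
      (ε := ENNReal.ofReal (ε/5)) (ENNReal.ofReal_pos.2 (by positivity)).ne'
  have hfmem : MemLp f 2 (volume.restrict (Ioc (0:ℝ) L)) := hfm.restrict _
  -- first error bound
  have hbound1 : Real.sqrt (∫ x in Ioc (0:ℝ) L, (f x - ψ' x)^2) ≤ ε/5 := by
    rw [sqrtIntSq_eq (show MemLp (fun x => f x - ψ' x) 2 (volume.restrict (Ioc (0:ℝ) L)) from hfmem.sub hψ'mem)]
    have e0 : eLpNorm (fun x => f x - ψ' x) 2 (volume.restrict (Ioc (0:ℝ) L))
        = eLpNorm (fun x => ψ' x - f x) 2 (volume.restrict (Ioc (0:ℝ) L)) := by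
      have e1 : (fun x => f x - ψ' x) = -(fun x => ψ' x - f x) := by funext x; simp
      rw [e1, eLpNorm_neg]
    have e2 : eLpNorm (fun x => ψ' x - f x) 2 (volume.restrict (Ioc (0:ℝ) L))
        = eLpNorm ((Ioc (0:ℝ) L).indicator ψ' - f) 2 (volume.restrict (Ioc (0:ℝ) L)) := by
      refine eLpNorm_congr_ae ?_
      filter_upwards [ae_restrict_mem measurableSet_Ioc] with x hx
      simp [Set.indicator_of_mem hx]
    have e3 : eLpNorm ((Ioc (0:ℝ) L).indicator ψ' - f) 2 (volume.restrict (Ioc (0:ℝ) L))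
        ≤ ENNReal.ofReal (ε/5) :=
      le_trans (eLpNorm_mono_measure _ Measure.restrict_le_self) hfe
    calc (eLpNorm (fun x => f x - ψ' x) 2 (volume.restrict (Ioc (0:ℝ) L))).toReal
        ≤ (ENNReal.ofReal (ε/5)).toReal := by
          refine ENNReal.toReal_mono ENNReal.ofReal_ne_top ?_
          rw [e0, e2]; exact e3
      _ = ε/5 := ENNReal.toReal_ofReal (by positivity)
  -- Weierstrass approximation
  set δ : ℝ := ε / (5 * (Real.sqrt L + 1)) with hδdef
  have hsqL : (0:ℝ) ≤ Real.sqrt L := Real.sqrt_nonneg L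
  have hδ : 0 < δ := by rw [hδdef]; positivity
  obtain ⟨P, hP⟩ := exists_polynomial_near_of_continuousOn 0 L f hfc.continuousOn δ hδ
  have hbound2 : Real.sqrt (∫ x in Ioc (0:ℝ) L, (P.eval x - f x)^2) ≤ ε/5 := by
    have hint1 : Integrable (fun x => (P.eval x - f x)^2) (volume.restrict (Ioc (0:ℝ) L)) :=
      ((P.continuous.sub hfc).pow 2).integrableOn_Ioc
    have hint2 : Integrable (fun _ : ℝ => δ^2) (volume.restrict (Ioc (0:ℝ) L)) :=
      integrable_const _
    have hle : ∫ x in Ioc (0:ℝ) L, (P.eval x - f x)^2 ≤ ∫ _x in Ioc (0:ℝ) L, δ^2 := by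
      refine integral_mono_ae hint1 hint2 ?_
      filter_upwards [ae_restrict_mem measurableSet_Ioc] with x hx
      have hPx := (hP x ⟨hx.1.le, hx.2⟩).le
      calc (P.eval x - f x)^2 = |P.eval x - f x|^2 := (sq_abs _).symm
        _ ≤ δ^2 := by nlinarith [abs_nonneg (P.eval x - f x)]
    have hconst : ∫ _x in Ioc (0:ℝ) L, δ^2 = L * δ^2 := by
      rw [MeasureTheory.integral_const, measureReal_restrict_apply_univ, Real.volume_real_Ioc, smul_eq_mul,
        max_eq_left (by linarith)]
      ring_nf
    have h1 : Real.sqrt (∫ x in Ioc (0:ℝ) L, (P.eval x - f x)^2) ≤ Real.sqrt (L * δ^2) :=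
      Real.sqrt_le_sqrt (by rw [← hconst]; exact hle)
    have h2 : Real.sqrt (L * δ^2) = Real.sqrt L * δ := by
      rw [Real.sqrt_mul hL.le, Real.sqrt_sq hδ.le]
    have h3 : Real.sqrt L * δ ≤ ε/5 := by
      rw [hδdef, show Real.sqrt L * (ε / (5 * (Real.sqrt L + 1)))
        = (Real.sqrt L * ε) / (5 * (Real.sqrt L + 1)) by ring]
      rw [div_le_div_iff₀ (by positivity) (by norm_num)]
      nlinarith [hε.le]
    linarith
  -- endpoint corrections
  set A : ℝ := P.eval L with hA
  set B : ℝ := P.derivative.eval 0 with hB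
  set Cc : ℝ := |A| + L * |B| + 1 with hCc
  have hCpos : 0 < Cc := by rw [hCc]; positivity
  obtain ⟨M, hM⟩ := exists_nat_ge (25 * Cc^2 * L / ε^2)
  set N : ℕ := max M 2 with hNdef
  have hN2 : 2 ≤ N := le_max_right _ _
  have hNpos : (0:ℝ) < (N:ℝ) := by
    have h0 : 0 < N := lt_of_lt_of_le (by norm_num) hN2
    exact_mod_cast h0
  have hMN : (M:ℝ) ≤ (N:ℝ) := by exact_mod_cast le_max_left M 2
  have key : L / (2*(N:ℝ)+1) ≤ (ε/(5*Cc))^2 := by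
    have h1 : 25*Cc^2*L/ε^2 ≤ (N:ℝ) := le_trans hM hMN
    have h2 : 25*Cc^2*L ≤ (N:ℝ)*ε^2 := by
      rw [div_le_iff₀ (by positivity)] at h1; linarith
    rw [div_pow, div_le_div_iff₀ (by positivity) (by positivity)]
    nlinarith [hNpos, hε, sq_nonneg ε]
  -- the basic integral
  have hbase : ∫ x in (0:ℝ)..L, (L⁻¹*x)^(2*N) = L/(2*(N:ℝ)+1) := by
    simp_rw [mul_pow]
    rw [intervalIntegral.integral_const_mul, integral_pow]
    have h2 : (L:ℝ)^(2*N) ≠ 0 := pow_ne_zero _ hL.ne'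
    field_simp [pow_succ]
    rw [zero_pow (by omega), sub_zero, one_div, inv_pow, pow_succ]; push_cast; field_simp
  have hJ : ∫ x in Ioc (0:ℝ) L, ((L⁻¹*x)^N)^2 = L/(2*(N:ℝ)+1) := by
    rw [← intervalIntegral.integral_of_le hL.le]
    have hpw : ∀ y : ℝ, ((L⁻¹*y)^N)^2 = (L⁻¹*y)^(2*N) := fun y => by
      rw [← pow_mul, mul_comm N 2]
    simp_rw [hpw]
    exact hbase
  have hJ' : ∫ x in Ioc (0:ℝ) L, (x*(1-L⁻¹*x)^N)^2 ≤ L^2 * (L/(2*(N:ℝ)+1)) := by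
    have hrefl : ∫ x in (0:ℝ)..L, (L⁻¹*(L - x))^(2*N) = L/(2*(N:ℝ)+1) := by
      have hsub := intervalIntegral.integral_comp_sub_left (a := (0:ℝ)) (b := L)
        (fun y => (L⁻¹ * y)^(2*N)) L
      simp only [sub_self, sub_zero] at hsub
      rw [hsub, hbase]
    have hint1 : Integrable (fun x => (x*(1-L⁻¹*x)^N)^2) (volume.restrict (Ioc (0:ℝ) L)) := by
      apply Continuous.integrableOn_Ioc
      exact (continuous_id.mul ((continuous_const.sub
        (continuous_const.mul continuous_id)).pow N)).pow 2
    have hint2 : Integrable (fun x : ℝ => L^2 * (L⁻¹*(L - x))^(2*N))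
        (volume.restrict (Ioc (0:ℝ) L)) := by
      apply Continuous.integrableOn_Ioc
      exact continuous_const.mul ((continuous_const.mul
        (continuous_const.sub continuous_id)).pow (2*N))
    have hle : ∫ x in Ioc (0:ℝ) L, (x*(1-L⁻¹*x)^N)^2
        ≤ ∫ x in Ioc (0:ℝ) L, L^2 * (L⁻¹*(L - x))^(2*N) := by
      refine integral_mono_ae hint1 hint2 ?_
      filter_upwards [ae_restrict_mem measurableSet_Ioc] with x hx
      have hx2 : x^2 ≤ L^2 := by nlinarith [hx.1.le, hx.2]
      have heq : (1 - L⁻¹*x) = L⁻¹*(L - x) := by field_simp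
      calc (x*(1-L⁻¹*x)^N)^2 = x^2 * ((1-L⁻¹*x)^N)^2 := by ring
        _ = x^2 * (L⁻¹*(L-x))^(2*N) := by rw [heq, ← pow_mul, mul_comm N 2]
        _ ≤ L^2 * (L⁻¹*(L-x))^(2*N) := by
            refine mul_le_mul_of_nonneg_right hx2 ?_
            exact (even_two_mul N).pow_nonneg _
    calc ∫ x in Ioc (0:ℝ) L, (x*(1-L⁻¹*x)^N)^2
        ≤ ∫ x in Ioc (0:ℝ) L, L^2 * (L⁻¹*(L - x))^(2*N) := hle
      _ = L^2 * (L/(2*(N:ℝ)+1)) := by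
          rw [MeasureTheory.integral_const_mul, ← intervalIntegral.integral_of_le hL.le, hrefl]
  have hsqrtkey : Real.sqrt (L/(2*(N:ℝ)+1)) ≤ ε/(5*Cc) := by
    have h0 := Real.sqrt_le_sqrt key
    rwa [Real.sqrt_sq (by positivity)] at h0
  have hboundU : Real.sqrt (∫ x in Ioc (0:ℝ) L, (-(A * (L⁻¹*x)^N))^2) ≤ |A| * (ε/(5*Cc)) := by
    have hpw : ∀ x:ℝ, (-(A * (L⁻¹*x)^N))^2 = A^2 * ((L⁻¹*x)^N)^2 := fun x => by ring
    simp_rw [hpw]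
    rw [MeasureTheory.integral_const_mul, hJ, Real.sqrt_mul (sq_nonneg A), Real.sqrt_sq_eq_abs]
    exact mul_le_mul_of_nonneg_left hsqrtkey (abs_nonneg A)
  have hboundV : Real.sqrt (∫ x in Ioc (0:ℝ) L, (-(B * (x*(1-L⁻¹*x)^N)))^2)
      ≤ |B| * (L * (ε/(5*Cc))) := by
    have hpw : ∀ x:ℝ, (-(B * (x*(1-L⁻¹*x)^N)))^2 = B^2 * (x*(1-L⁻¹*x)^N)^2 := fun x => by ring
    simp_rw [hpw]
    rw [MeasureTheory.integral_const_mul, Real.sqrt_mul (sq_nonneg B), Real.sqrt_sq_eq_abs]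
    refine mul_le_mul_of_nonneg_left ?_ (abs_nonneg B)
    have h1 : Real.sqrt (∫ x in Ioc (0:ℝ) L, (x*(1-L⁻¹*x)^N)^2)
        ≤ Real.sqrt (L^2 * (L/(2*(N:ℝ)+1))) := Real.sqrt_le_sqrt hJ'
    have h2 : Real.sqrt (L^2 * (L/(2*(N:ℝ)+1))) = L * Real.sqrt (L/(2*(N:ℝ)+1)) := by
      rw [Real.sqrt_mul (sq_nonneg L), Real.sqrt_sq hL.le]
    have h3 : L * Real.sqrt (L/(2*(N:ℝ)+1)) ≤ L * (ε/(5*Cc)) :=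
      mul_le_mul_of_nonneg_left hsqrtkey hL.le
    linarith
  -- the corrected polynomial
  set U : Polynomial ℝ := (Polynomial.C L⁻¹ * Polynomial.X)^N with hU
  set V : Polynomial ℝ := Polynomial.X * (1 - Polynomial.C L⁻¹ * Polynomial.X)^N with hV
  set Q : Polynomial ℝ := P - Polynomial.C A * U - Polynomial.C B * V with hQ
  have hQL : Q.eval L = 0 := by
    simp [hQ, hU, hV, inv_mul_cancel₀ hL.ne', zero_pow (show N ≠ 0 by omega), hA]
  have hQ'0 : Q.derivative.eval 0 = 0 := by
    simp [hQ, hU, hV, Polynomial.derivative_pow, Polynomial.derivative_mul,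
      zero_pow (show N - 1 ≠ 0 by omega), hB]
  refine ⟨fun x => -(Q.derivative.eval x), fun x => -((Q.derivative.derivative).eval x),
    ?_, ?_, ?_, ?_⟩
  · intro x _
    exact ((Q.derivative.hasDerivAt x).neg).hasDerivWithinAt
  · show -(Q.derivative.eval 0) = 0
    rw [hQ'0, neg_zero]
  · exact ((Q.derivative.derivative.continuous.neg).pow 2).intervalIntegrable 0 L
  · have hFTC : ∀ x : ℝ, (∫ t in x..L, -(Q.derivative.eval t)) = Q.eval x := by
      intro x
      rw [intervalIntegral.integral_neg, intervalIntegral.integral_eq_sub_of_hasDerivAt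
        (fun t _ => Q.hasDerivAt t) ((Q.derivative.continuous).intervalIntegrable _ _), hQL]
      ring
    simp only [hFTC]
    rw [intervalIntegral.integral_of_le hL.le]
    have hdecomp : ∀ x : ℝ, Q.eval x - ψ' x =
        ((P.eval x - f x) + (f x - ψ' x)) +
          ((-(A * (L⁻¹*x)^N)) + (-(B * (x*(1-L⁻¹*x)^N)))) := by
      intro x
      have hQx : Q.eval x = P.eval x - A * (L⁻¹*x)^N - B * (x*(1-L⁻¹*x)^N) := by
        simp [hQ, hU, hV]
      rw [hQx]; ring
    simp only [hdecomp]
    have ha : MemLp (fun x => P.eval x - f x) 2 (volume.restrict (Ioc (0:ℝ) L)) :=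
      (cont_memLp L P.continuous).sub hfmem
    have hb : MemLp (fun x => f x - ψ' x) 2 (volume.restrict (Ioc (0:ℝ) L)) :=
      hfmem.sub hψ'mem
    have hc : MemLp (fun x : ℝ => -(A * (L⁻¹*x)^N)) 2 (volume.restrict (Ioc (0:ℝ) L)) :=
      cont_memLp L ((continuous_const.mul ((continuous_const.mul continuous_id).pow N)).neg)
    have hd : MemLp (fun x : ℝ => -(B * (x*(1-L⁻¹*x)^N))) 2 (volume.restrict (Ioc (0:ℝ) L)) :=
      cont_memLp L ((continuous_const.mul (continuous_id.mul ((continuous_const.sub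
        (continuous_const.mul continuous_id)).pow N))).neg)
    have m1 : Real.sqrt (∫ x in Ioc (0:ℝ) L,
          (((P.eval x - f x) + (f x - ψ' x)) +
            ((-(A * (L⁻¹*x)^N)) + (-(B * (x*(1-L⁻¹*x)^N)))))^2)
        ≤ Real.sqrt (∫ x in Ioc (0:ℝ) L, ((P.eval x - f x) + (f x - ψ' x))^2)
          + Real.sqrt (∫ x in Ioc (0:ℝ) L,
              ((-(A * (L⁻¹*x)^N)) + (-(B * (x*(1-L⁻¹*x)^N))))^2) :=
      sqrtIntSq_add_le (ha.add hb) (hc.add hd)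
    have m2 : Real.sqrt (∫ x in Ioc (0:ℝ) L, ((P.eval x - f x) + (f x - ψ' x))^2)
        ≤ Real.sqrt (∫ x in Ioc (0:ℝ) L, (P.eval x - f x)^2)
          + Real.sqrt (∫ x in Ioc (0:ℝ) L, (f x - ψ' x)^2) :=
      sqrtIntSq_add_le ha hb
    have m3 : Real.sqrt (∫ x in Ioc (0:ℝ) L,
          ((-(A * (L⁻¹*x)^N)) + (-(B * (x*(1-L⁻¹*x)^N))))^2)
        ≤ Real.sqrt (∫ x in Ioc (0:ℝ) L, (-(A * (L⁻¹*x)^N))^2)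
          + Real.sqrt (∫ x in Ioc (0:ℝ) L, (-(B * (x*(1-L⁻¹*x)^N)))^2) :=
      sqrtIntSq_add_le hc hd
    have hq5 : (|A| * (ε/(5*Cc))) + (|B| * (L * (ε/(5*Cc)))) ≤ ε/5 := by
      have h0 : (|A| * (ε/(5*Cc))) + (|B| * (L * (ε/(5*Cc)))) = (|A| + L*|B|) * (ε/(5*Cc)) := by
        ring
      have h1 : (|A| + L*|B|) * (ε/(5*Cc)) ≤ Cc * (ε/(5*Cc)) := by
        refine mul_le_mul_of_nonneg_right ?_ (by positivity)
        rw [hCc]; linarith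
      have h2 : Cc * (ε/(5*Cc)) = ε/5 := by
        rw [mul_comm (5:ℝ) Cc, mul_div_assoc', mul_div_mul_left _ _ hCpos.ne']
      linarith
    linarith [m1, m2, m3, hbound1, hbound2, hboundU, hboundV, hq5, hε]
end

section
/- Let W be C³ satisfying W(x,s) ≥ −K₀ and ∂_s W(x,s)s ≥ W(x,s) − K₁, and let u be a weak solution of u̇ = (−u'' + ∂_s W(x,u))'' − β u' on (0,L)×(0,T) with initial datum u₀ ∈ V, satisfying the energy equality (d/dt)ℰ(u(t)) + ‖μ(t)‖_V² = −β ∫₀ᴸ u'(x,t) μ(x,t) dx, where ℰ(v) = ½∫₀ᴸ|v'|² dx + ∫₀ᴸ W(x,v) dx and μ = −u'' + ∂_s W(x,u). Then for all t ∈ [0,T]: ℰ(u(t)) ≤ (ℰ(u₀) + L K₀) e^{β²L²T} − L K₀, and consequently ‖u(t)‖_V² ≤ 2(ℰ(u₀) + L K₀) e^{β²L²T}. -/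
open MeasureTheory Set intervalIntegral

/-- The pointwise derivative function of a function differentiable within `Icc 0 L`
is a.e. strongly measurable on `Ioc 0 b` for `b ≤ L`. -/
lemma aux_aesm (L b : ℝ) (hbL : b ≤ L) (f f1 : ℝ → ℝ)
    (hd : ∀ x ∈ Set.Icc (0:ℝ) L, HasDerivWithinAt f (f1 x) (Set.Icc 0 L) x) :
    AEStronglyMeasurable f1 (volume.restrict (Set.Ioc 0 b)) := by
  have h1 : Measurable (deriv f) := measurable_deriv f
  refine h1.aestronglyMeasurable.restrict.congr ?_
  rw [Filter.eventuallyEq_iff_exists_mem]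
  refine ⟨{x | deriv f x = f1 x}, ?_, fun x hx => hx⟩
  rw [mem_ae_iff, Measure.restrict_apply' measurableSet_Ioc]
  refine measure_mono_null (fun x hx => ?_) (measure_singleton L)
  obtain ⟨hne, hx0, hxb⟩ : _ ∧ 0 < x ∧ x ≤ b := ⟨hx.1, hx.2.1, hx.2.2⟩
  simp only [mem_compl_iff, mem_setOf_eq] at hne
  by_contra hxL
  have hxL' : x < L := lt_of_le_of_ne (hxb.trans hbL) (by simpa using hxL)
  have : HasDerivAt f (f1 x) x :=
    (hd x ⟨hx0.le, hxb.trans hbL⟩).hasDerivAt (Icc_mem_nhds hx0 hxL')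
  exact hne this.deriv

/-- Poincaré inequality on `[0,L]` for a function vanishing at `0`:
`g(b)² ≤ L ∫₀ᴸ g'²`. -/
lemma poincare_sq (L : ℝ) (hL : 0 < L) (g g1 : ℝ → ℝ) (hg0 : g 0 = 0)
    (hd : ∀ x ∈ Set.Icc (0:ℝ) L, HasDerivWithinAt g (g1 x) (Set.Icc 0 L) x)
    (hint : IntervalIntegrable (fun x => g1 x ^ 2) volume 0 L) :
    ∀ b ∈ Set.Icc (0:ℝ) L, (g b) ^ 2 ≤ L * ∫ x in (0:ℝ)..L, g1 x ^ 2 := by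
  set M := ∫ x in (0:ℝ)..L, g1 x ^ 2 with hMdef
  have hM0 : 0 ≤ M := intervalIntegral.integral_nonneg hL.le (fun x _ => sq_nonneg _)
  intro b hb
  obtain ⟨hb0, hbL⟩ := hb
  have haesm : AEStronglyMeasurable g1 (volume.restrict (Set.Ioc 0 b)) :=
    aux_aesm L b hbL g g1 hd
  have hsub : Set.uIcc (0:ℝ) b ⊆ Set.uIcc (0:ℝ) L := by
    rw [Set.uIcc_of_le hb0, Set.uIcc_of_le hL.le]
    exact Set.Icc_subset_Icc le_rfl hbL
  have hintb2 : IntervalIntegrable (fun x => g1 x ^ 2) volume 0 b := hint.mono_set hsub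
  have hb2leM : (∫ x in (0:ℝ)..b, g1 x ^ 2) ≤ M :=
    intervalIntegral.integral_mono_interval le_rfl hb0 hbL
      (Filter.Eventually.of_forall fun x => sq_nonneg _) hint
  have key : ∀ c : ℝ, 0 < c → 2 * |g b| ≤ L * c + M / c := by
    intro c hc
    have hbd : ∀ x : ℝ, |g1 x| ≤ c / 2 + g1 x ^ 2 / (2 * c) := by
      intro x
      have hrw : c / 2 + g1 x ^ 2 / (2 * c) = (c ^ 2 + g1 x ^ 2) / (2 * c) := by
        field_simp
      rw [hrw, le_div_iff₀ (by positivity)]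
      nlinarith [sq_nonneg (|g1 x| - c), sq_abs (g1 x)]
    have hintmaj : IntervalIntegrable (fun x => c / 2 + g1 x ^ 2 / (2 * c)) volume 0 b :=
      intervalIntegrable_const.add (hintb2.div_const _)
    have hint1 : IntervalIntegrable g1 volume 0 b := by
      refine hintmaj.mono_fun' ?_ ?_
      · rwa [Set.uIoc_of_le hb0]
      · exact Filter.Eventually.of_forall fun x => by
          simpa [Real.norm_eq_abs] using hbd x
    have hftc : ∫ x in (0:ℝ)..b, g1 x = g b - g 0 := by
      refine intervalIntegral.integral_eq_sub_of_hasDeriv_right_of_le hb0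
        (fun x hx => ((hd x ⟨hx.1, hx.2.trans hbL⟩).continuousWithinAt).mono
          (Set.Icc_subset_Icc le_rfl hbL)) (fun x hx => ?_) hint1
      exact ((hd x ⟨hx.1.le, (hx.2.le).trans hbL⟩).hasDerivAt
        (Icc_mem_nhds hx.1 (lt_of_lt_of_le hx.2 hbL))).hasDerivWithinAt
    have h1 : |g b| ≤ ∫ x in (0:ℝ)..b, |g1 x| := by
      rw [hg0, sub_zero] at hftc
      rw [← hftc]
      exact intervalIntegral.abs_integral_le_integral_abs hb0
    have h2 : (∫ x in (0:ℝ)..b, |g1 x|) ≤ ∫ x in (0:ℝ)..b, (c / 2 + g1 x ^ 2 / (2 * c)) :=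
      intervalIntegral.integral_mono_on hb0 hint1.abs hintmaj (fun x _ => hbd x)
    have h3 : (∫ x in (0:ℝ)..b, (c / 2 + g1 x ^ 2 / (2 * c)))
        = b * (c / 2) + (∫ x in (0:ℝ)..b, g1 x ^ 2) / (2 * c) := by
      rw [intervalIntegral.integral_add intervalIntegrable_const (hintb2.div_const _),
        intervalIntegral.integral_const, intervalIntegral.integral_div, smul_eq_mul, sub_zero]
    have h4 : b * (c / 2) ≤ L * (c / 2) := by
      have := mul_le_mul_of_nonneg_right hbL (by positivity : (0:ℝ) ≤ c / 2)
      linarith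
    have h5 : (∫ x in (0:ℝ)..b, g1 x ^ 2) / (2 * c) ≤ M / (2 * c) := by
      gcongr
    have : |g b| ≤ L * (c / 2) + M / (2 * c) := by linarith
    have hMc : M / (2 * c) = (M / c) / 2 := by ring
    linarith [this, hMc ▸ this]
  -- conclude
  by_contra hcon
  push_neg at hcon
  have hpos : 0 < (g b) ^ 2 := lt_of_le_of_lt (mul_nonneg hL.le hM0) hcon
  have habs : 0 < |g b| := by
    rcases eq_or_ne (g b) 0 with h | h
    · rw [h] at hpos; simp at hpos
    · exact abs_pos.mpr h
  have hk := key (|g b| / L) (by positivity)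
  have hgne : |g b| ≠ 0 := ne_of_gt habs
  have hLne : L ≠ 0 := ne_of_gt hL
  have e1 : L * (|g b| / L) = |g b| := by field_simp
  have e2 : M / (|g b| / L) = M * L / |g b| := by
    rw [div_div_eq_mul_div, mul_comm]
  rw [e1, e2] at hk
  have hk2 : |g b| ≤ M * L / |g b| := by linarith
  rw [le_div_iff₀ habs] at hk2
  nlinarith [sq_abs (g b)]

/-- Lower bound on the dissipation bracket:
`‖g1‖² + β∫ f1 g ≥ -(β²L²/2)‖f1‖²`. -/
lemma cross_bound (L β : ℝ) (hL : 0 < L) (hβ : 0 ≤ β) (f f1 g g1 : ℝ → ℝ)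
    (hg0 : g 0 = 0)
    (hdf : ∀ x ∈ Set.Icc (0:ℝ) L, HasDerivWithinAt f (f1 x) (Set.Icc 0 L) x)
    (hdg : ∀ x ∈ Set.Icc (0:ℝ) L, HasDerivWithinAt g (g1 x) (Set.Icc 0 L) x)
    (hintf : IntervalIntegrable (fun x => f1 x ^ 2) volume 0 L)
    (hintg : IntervalIntegrable (fun x => g1 x ^ 2) volume 0 L) :
    -((β ^ 2 * L ^ 2 / 2) * ∫ x in (0:ℝ)..L, f1 x ^ 2)
      ≤ (∫ x in (0:ℝ)..L, g1 x ^ 2) + β * ∫ x in (0:ℝ)..L, f1 x * g x := by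
  set M := ∫ x in (0:ℝ)..L, g1 x ^ 2 with hMdef
  set N := ∫ x in (0:ℝ)..L, f1 x ^ 2 with hNdef
  have hM0 : 0 ≤ M := intervalIntegral.integral_nonneg hL.le (fun x _ => sq_nonneg _)
  have hgb : ∀ x ∈ Set.Icc (0:ℝ) L, (g x) ^ 2 ≤ L * M :=
    poincare_sq L hL g g1 hg0 hdg hintg
  have hgcont : ContinuousOn g (Set.Icc 0 L) := fun x hx => (hdg x hx).continuousWithinAt
  have haesmf1 : AEStronglyMeasurable f1 (volume.restrict (Set.Ioc 0 L)) :=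
    aux_aesm L L le_rfl f f1 hdf
  have haesmg : AEStronglyMeasurable g (volume.restrict (Set.Ioc 0 L)) :=
    (hgcont.mono Set.Ioc_subset_Icc_self).aestronglyMeasurable measurableSet_Ioc
  have hintfg : IntervalIntegrable (fun x => f1 x * g x) volume 0 L := by
    have hmaj : IntervalIntegrable (fun x => (f1 x ^ 2 + L * M) / 2) volume 0 L :=
      (hintf.add intervalIntegrable_const).div_const 2
    refine hmaj.mono_fun' ?_ ?_
    · rw [Set.uIoc_of_le hL.le]; exact haesmf1.mul haesmg
    · rw [Set.uIoc_of_le hL.le]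
      refine (ae_restrict_mem measurableSet_Ioc).mono (fun x hx => ?_)
      have hgx := hgb x (Set.Ioc_subset_Icc_self hx)
      simp only [Real.norm_eq_abs, abs_mul]
      nlinarith [sq_nonneg (|f1 x| - |g x|), sq_abs (f1 x), sq_abs (g x),
        abs_nonneg (f1 x), abs_nonneg (g x)]
  have hDdef : M = 2 * L * (M / (2 * L)) := by field_simp
  have hpt : ∀ x ∈ Set.Icc (0:ℝ) L,
      -((β ^ 2 * L ^ 2 / 2) * f1 x ^ 2) - M / (2 * L) ≤ β * (f1 x * g x) := by
    intro x hx
    have hgx := hgb x hx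
    nlinarith [sq_nonneg (β * L ^ 2 * f1 x + g x), mul_pos hL hL, hDdef]
  have h1 : IntervalIntegrable (fun x => -((β ^ 2 * L ^ 2 / 2) * f1 x ^ 2)) volume 0 L := by
    exact (hintf.const_mul (β ^ 2 * L ^ 2 / 2)).neg
  have hlhs : IntervalIntegrable
      (fun x => -((β ^ 2 * L ^ 2 / 2) * f1 x ^ 2) - M / (2 * L)) volume 0 L :=
    h1.sub intervalIntegrable_const
  have hmono := intervalIntegral.integral_mono_on hL.le hlhs (hintfg.const_mul β) hpt
  rw [intervalIntegral.integral_sub h1 intervalIntegrable_const,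
    intervalIntegral.integral_neg, intervalIntegral.integral_const_mul,
    intervalIntegral.integral_const, smul_eq_mul, sub_zero,
    intervalIntegral.integral_const_mul] at hmono
  have hhalf : L * (M / (2 * L)) = M / 2 := by field_simp
  rw [hhalf] at hmono
  linarith

/-- Remark 5.1 (a priori bound): if `u` is a weak solution of
`u̇ = (−u'' + ∂ₛW(x,u))'' − βu'` satisfying the energy equality
`d/dt ℰ(u(t)) + ‖μ(t)‖_V² = −β∫₀ᴸ u' μ` (written in integrated form), where
`ℰ(v) = ½∫₀ᴸ|v'|² + ∫₀ᴸ W(x,v)`, `μ = −u'' + ∂ₛW(x,u) ∈ V`, and `W ≥ −K₀`,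
`∂ₛW(x,s)s ≥ W(x,s) − K₁`, then
`ℰ(u(t)) ≤ (ℰ(u₀) + LK₀)e^{β²L²T} − LK₀` and
`‖u(t)‖_V² ≤ 2(ℰ(u₀) + LK₀)e^{β²L²T}` for all `t ∈ [0,T]`. -/
theorem energy_a_priori_bound (L T β K₀ K₁ : ℝ) (hL : 0 < L) (hT : 0 < T)
    (hβ : 0 ≤ β) (hK₀ : 0 < K₀) (hK₁ : 0 < K₁)
    (W Ws : ℝ → ℝ → ℝ)
    (hW : ContDiff ℝ 3 (fun p : ℝ × ℝ => W p.1 p.2))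
    (hWs : ∀ x s : ℝ, HasDerivAt (fun r => W x r) (Ws x s) s)
    (hWlb : ∀ x s : ℝ, -K₀ ≤ W x s)
    (hWstr : ∀ x s : ℝ, W x s - K₁ ≤ Ws x s * s)
    (u u1 u2 μ μ1 : ℝ → ℝ → ℝ) (E : ℝ → ℝ) (u0 : ℝ → ℝ)
    (hdu : ∀ t ∈ Set.Icc (0:ℝ) T, ∀ x ∈ Set.Icc (0:ℝ) L,
      HasDerivWithinAt (u t) (u1 t x) (Set.Icc 0 L) x)
    (hdu1 : ∀ t ∈ Set.Icc (0:ℝ) T, ∀ x ∈ Set.Icc (0:ℝ) L,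
      HasDerivWithinAt (u1 t) (u2 t x) (Set.Icc 0 L) x)
    (hbc : ∀ t ∈ Set.Icc (0:ℝ) T, u t 0 = 0)
    (hinit : ∀ x ∈ Set.Icc (0:ℝ) L, u 0 x = u0 x)
    (hμdef : ∀ t ∈ Set.Icc (0:ℝ) T, ∀ x ∈ Set.Icc (0:ℝ) L,
      μ t x = -(u2 t x) + Ws x (u t x))
    (hμ0 : ∀ t ∈ Set.Icc (0:ℝ) T, μ t 0 = 0)
    (hdμ : ∀ t ∈ Set.Icc (0:ℝ) T, ∀ x ∈ Set.Icc (0:ℝ) L,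
      HasDerivWithinAt (μ t) (μ1 t x) (Set.Icc 0 L) x)
    (hintu1 : ∀ t ∈ Set.Icc (0:ℝ) T, IntervalIntegrable (fun x => (u1 t x) ^ 2)
      MeasureTheory.volume 0 L)
    (hintμ1 : ∀ t ∈ Set.Icc (0:ℝ) T, IntervalIntegrable (fun x => (μ1 t x) ^ 2)
      MeasureTheory.volume 0 L)
    (hEdef : ∀ t ∈ Set.Icc (0:ℝ) T,
      E t = (1/2) * (∫ x in (0:ℝ)..L, (u1 t x) ^ 2) + ∫ x in (0:ℝ)..L, W x (u t x))
    (hintE : IntervalIntegrable (fun s =>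
        (∫ x in (0:ℝ)..L, (μ1 s x) ^ 2) + β * ∫ x in (0:ℝ)..L, u1 s x * μ s x)
      MeasureTheory.volume 0 T)
    (hEnergyEq : ∀ t ∈ Set.Icc (0:ℝ) T,
      E t = E 0 - ∫ s in (0:ℝ)..t,
        ((∫ x in (0:ℝ)..L, (μ1 s x) ^ 2) + β * ∫ x in (0:ℝ)..L, u1 s x * μ s x)) :
    ∀ t ∈ Set.Icc (0:ℝ) T,
      E t ≤ (E 0 + L * K₀) * Real.exp (β ^ 2 * L ^ 2 * T) - L * K₀ ∧
      (∫ x in (0:ℝ)..L, (u1 t x) ^ 2)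
        ≤ 2 * (E 0 + L * K₀) * Real.exp (β ^ 2 * L ^ 2 * T) := by
  -- notation
  set C : ℝ := β ^ 2 * L ^ 2 with hCdef
  have hC0 : 0 ≤ C := by positivity
  set gfun : ℝ → ℝ := fun s =>
    (∫ x in (0:ℝ)..L, (μ1 s x) ^ 2) + β * ∫ x in (0:ℝ)..L, u1 s x * μ s x with hgdef
  -- lower bound on potential integral and basic consequences
  have hWint : ∀ s ∈ Set.Icc (0:ℝ) T,
      -(L * K₀) ≤ ∫ x in (0:ℝ)..L, W x (u s x) := by
    intro s hs
    have hucont : ContinuousOn (u s) (Set.Icc 0 L) :=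
      fun x hx => (hdu s hs x hx).continuousWithinAt
    have hWc : ContinuousOn (fun x => W x (u s x)) (Set.Icc 0 L) :=
      hW.continuous.comp_continuousOn (f := fun x => (x, u s x)) (continuousOn_id.prodMk hucont)
    have hWi : IntervalIntegrable (fun x => W x (u s x)) volume 0 L := by
      apply ContinuousOn.intervalIntegrable; rwa [Set.uIcc_of_le hL.le]
    have h := intervalIntegral.integral_mono_on hL.le
      intervalIntegrable_const hWi (fun x _ => hWlb x (u s x))
    rwa [intervalIntegral.integral_const, smul_eq_mul, sub_zero, mul_neg] at h
  have hN0 : ∀ s ∈ Set.Icc (0:ℝ) T, 0 ≤ ∫ x in (0:ℝ)..L, (u1 s x) ^ 2 :=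
    fun s _ => intervalIntegral.integral_nonneg hL.le (fun x _ => sq_nonneg _)
  have hNle : ∀ s ∈ Set.Icc (0:ℝ) T,
      (∫ x in (0:ℝ)..L, (u1 s x) ^ 2) ≤ 2 * (E s + L * K₀) := by
    intro s hs
    have h1 := hEdef s hs
    have h2 := hWint s hs
    linarith
  have hEpos : ∀ s ∈ Set.Icc (0:ℝ) T, 0 ≤ E s + L * K₀ := by
    intro s hs
    have h1 := hEdef s hs
    have h2 := hWint s hs
    have h3 := hN0 s hs
    linarith
  -- lower bound on the dissipation bracket
  have hg_lb : ∀ s ∈ Set.Icc (0:ℝ) T, -(C * (E s + L * K₀)) ≤ gfun s := by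
    intro s hs
    have hkey := cross_bound L β hL hβ (u s) (u1 s) (μ s) (μ1 s) (hμ0 s hs)
      (hdu s hs) (hdμ s hs) (hintu1 s hs) (hintμ1 s hs)
    have h1 := hNle s hs
    have h2 : (0:ℝ) ≤ β ^ 2 * L ^ 2 / 2 := by positivity
    have h3 := mul_le_mul_of_nonneg_left h1 h2
    simp only [hgdef, hCdef]
    nlinarith [h3, hkey]
  -- continuity of E on [0,T]
  have hFcont : ContinuousOn (fun t => ∫ s in (0:ℝ)..t, gfun s) (Set.Icc 0 T) := by
    have h := intervalIntegral.continuousOn_primitive_interval'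
      hintE
      (by rw [Set.uIcc_of_le hT.le]; exact Set.left_mem_Icc.2 hT.le)
    rwa [Set.uIcc_of_le hT.le] at h
  have hEcont : ContinuousOn E (Set.Icc 0 T) :=
    (continuousOn_const.sub hFcont).congr (fun t ht => hEnergyEq t ht)
  have hφcont : ContinuousOn (fun s => E s + L * K₀) (Set.Icc 0 T) :=
    hEcont.add continuousOn_const
  have hφint : ∀ t ∈ Set.Icc (0:ℝ) T,
      IntervalIntegrable (fun s => E s + L * K₀) volume 0 t := by
    intro t ht
    apply ContinuousOn.intervalIntegrable
    rw [Set.uIcc_of_le ht.1]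
    exact hφcont.mono (Set.Icc_subset_Icc le_rfl ht.2)
  -- integral inequality E t + LK₀ ≤ A + C ∫₀ᵗ (E + LK₀)
  set A : ℝ := E 0 + L * K₀ with hAdef
  have hA0 : 0 ≤ A := hEpos 0 ⟨le_rfl, hT.le⟩
  set P : ℝ → ℝ := fun t => ∫ s in (0:ℝ)..t, (E s + L * K₀) with hPdef
  have hEineq : ∀ t ∈ Set.Icc (0:ℝ) T, E t + L * K₀ ≤ A + C * P t := by
    intro t ht
    have hgi : IntervalIntegrable gfun volume 0 t :=
      hintE.mono_set (by
        rw [Set.uIcc_of_le ht.1, Set.uIcc_of_le hT.le]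
        exact Set.Icc_subset_Icc le_rfl ht.2)
    have hci : IntervalIntegrable (fun s => -(C * (E s + L * K₀))) volume 0 t := by
      apply ContinuousOn.intervalIntegrable
      rw [Set.uIcc_of_le ht.1]
      exact ((continuousOn_const.mul
        ((hEcont.mono (Set.Icc_subset_Icc le_rfl ht.2)).add continuousOn_const)).neg)
    have hmono := intervalIntegral.integral_mono_on ht.1 hci hgi
      (fun s hs => hg_lb s ⟨hs.1, hs.2.trans ht.2⟩)
    rw [intervalIntegral.integral_neg, intervalIntegral.integral_const_mul] at hmono
    have hEt := hEnergyEq t ht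
    simp only [hPdef, hAdef]
    linarith
  -- Gronwall via the auxiliary function H
  set H : ℝ → ℝ := fun t => (A + C * P t) * Real.exp (-C * t) with hHdef
  have hHd : ∀ t ∈ Set.Ioo (0:ℝ) T,
      HasDerivAt H ((0 + C * (E t + L * K₀)) * Real.exp (-C * t)
        + (A + C * P t) * (Real.exp (-C * t) * (-C * 1))) t := by
    intro t ht
    have htmem : t ∈ Set.Icc (0:ℝ) T := ⟨ht.1.le, ht.2.le⟩
    have hnhds : Set.Icc (0:ℝ) T ∈ nhds t := Icc_mem_nhds ht.1 ht.2
    have hPd : HasDerivAt P (E t + L * K₀) t := by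
      refine intervalIntegral.integral_hasDerivAt_right (hφint t htmem)
        ⟨Set.Icc 0 T, hnhds, hφcont.aestronglyMeasurable measurableSet_Icc⟩ ?_
      exact (hφcont t htmem).continuousAt hnhds
    have hexp : HasDerivAt (fun x : ℝ => Real.exp (-C * x))
        (Real.exp (-C * t) * (-C * 1)) t := ((hasDerivAt_id t).const_mul (-C)).exp
    exact ((hasDerivAt_const t A).add (hPd.const_mul C)).mul hexp
  have hHanti : AntitoneOn H (Set.Icc 0 T) := by
    refine antitoneOn_of_deriv_nonpos (convex_Icc 0 T) ?_ ?_ ?_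
    · exact (continuousOn_const.add (continuousOn_const.mul (by
        have h := intervalIntegral.continuousOn_primitive_interval'
          (hφint T ⟨hT.le, le_rfl⟩) (by rw [Set.uIcc_of_le hT.le]; exact Set.left_mem_Icc.2 hT.le)
        rwa [Set.uIcc_of_le hT.le] at h))).mul
        (Real.continuous_exp.comp (continuous_const.mul continuous_id)).continuousOn
    · rw [interior_Icc]
      exact fun t ht => ((hHd t ht).differentiableAt).differentiableWithinAt
    · rw [interior_Icc]
      intro t ht
      rw [(hHd t ht).deriv]
      have hkey := hEineq t ⟨ht.1.le, ht.2.le⟩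
      have he : 0 < Real.exp (-C * t) := Real.exp_pos _
      have heq : (0 + C * (E t + L * K₀)) * Real.exp (-C * t)
          + (A + C * P t) * (Real.exp (-C * t) * (-C * 1))
          = C * Real.exp (-C * t) * ((E t + L * K₀) - (A + C * P t)) := by ring
      rw [heq]
      exact mul_nonpos_of_nonneg_of_nonpos (by positivity) (by linarith)
  -- conclude
  intro t ht
  have hH0 : H 0 = A := by
    simp [hHdef, hPdef, intervalIntegral.integral_same]
  have hHle : H t ≤ A := by
    rw [← hH0]
    exact hHanti (Set.left_mem_Icc.2 hT.le) ht ht.1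
  have he1 : Real.exp (-C * t) * Real.exp (C * t) = 1 := by
    rw [← Real.exp_add]; ring_nf; exact Real.exp_zero
  have hexp_pos : (0:ℝ) < Real.exp (C * t) := Real.exp_pos _
  have h2 : A + C * P t ≤ A * Real.exp (C * t) := by
    have := mul_le_mul_of_nonneg_right hHle hexp_pos.le
    simp only [hHdef] at this
    calc A + C * P t = (A + C * P t) * (Real.exp (-C * t) * Real.exp (C * t)) := by
          rw [he1, mul_one]
      _ = (A + C * P t) * Real.exp (-C * t) * Real.exp (C * t) := by ring
      _ ≤ A * Real.exp (C * t) := this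
  have h3 : Real.exp (C * t) ≤ Real.exp (C * T) :=
    Real.exp_le_exp.2 (mul_le_mul_of_nonneg_left ht.2 hC0)
  have h4 : A * Real.exp (C * t) ≤ A * Real.exp (C * T) :=
    mul_le_mul_of_nonneg_left h3 hA0
  have h5 : E t + L * K₀ ≤ A * Real.exp (C * T) := by
    have := hEineq t ht
    linarith
  constructor
  · linarith
  · have h6 := hNle t ht
    linarith
end

section
/- Let W be C³ with W(x,s) ≥ −K₀ and ∂_s W(x,s)s ≥ W(x,s) − K₁. Let u ∈ V ∩ H³(0,L) with u'(L)=0, and set μ := −u'' + ∂_s W(·,u) ∈ V. Then ℰ(u) ≤ (L⁴/2)‖μ‖_V² + K₁ L, where ℰ(u) = ½∫₀ᴸ|u'|² dx + ∫₀ᴸ W(x,u) dx. -/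
open MeasureTheory Set intervalIntegral

/-- Estimate (5.2): for `u ∈ V ∩ H³(0,L)` with `u'(L) = 0` and
`μ = −u'' + ∂ₛW(·,u) ∈ V`, under the structural assumptions `W ≥ −K₀` and
`∂ₛW(x,s)s ≥ W(x,s) − K₁`, one has `ℰ(u) ≤ (L⁴/2)‖μ‖_V² + K₁L`, where
`ℰ(u) = ½∫₀ᴸ|u'|² + ∫₀ᴸ W(x,u)`. -/
theorem energy_bounded_by_mu (L K₀ K₁ : ℝ) (hL : 0 < L) (hK₀ : 0 < K₀)
    (hK₁ : 0 < K₁) (W Ws : ℝ → ℝ → ℝ)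
    (hW : ContDiff ℝ 3 (fun p : ℝ × ℝ => W p.1 p.2))
    (hWs : ∀ x s : ℝ, HasDerivAt (fun r => W x r) (Ws x s) s)
    (hWlb : ∀ x s : ℝ, -K₀ ≤ W x s)
    (hWstr : ∀ x s : ℝ, W x s - K₁ ≤ Ws x s * s)
    (u u1 u2 μ μ1 : ℝ → ℝ)
    (hdu : ∀ x ∈ Set.Icc (0:ℝ) L, HasDerivWithinAt u (u1 x) (Set.Icc 0 L) x)
    (hdu1 : ∀ x ∈ Set.Icc (0:ℝ) L, HasDerivWithinAt u1 (u2 x) (Set.Icc 0 L) x)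
    (hu2cont : ContinuousOn u2 (Set.Icc 0 L))
    (hu0 : u 0 = 0) (hu1L : u1 L = 0)
    (hμdef : ∀ x ∈ Set.Icc (0:ℝ) L, μ x = -(u2 x) + Ws x (u x))
    (hμ0 : μ 0 = 0)
    (hdμ : ∀ x ∈ Set.Icc (0:ℝ) L, HasDerivWithinAt μ (μ1 x) (Set.Icc 0 L) x)
    (hintμ1 : IntervalIntegrable (fun x => (μ1 x) ^ 2) MeasureTheory.volume 0 L) :
    (1/2) * (∫ x in (0:ℝ)..L, (u1 x) ^ 2) + (∫ x in (0:ℝ)..L, W x (u x))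
      ≤ (L ^ 4 / 2) * (∫ x in (0:ℝ)..L, (μ1 x) ^ 2) + K₁ * L := by
  have hL0 : (0:ℝ) ≤ L := hL.le
  have hIcc : Set.uIcc (0:ℝ) L = Set.Icc 0 L := Set.uIcc_of_le hL0
  -- continuity of the basic functions on [0,L]
  have hucont : ContinuousOn u (Set.Icc 0 L) := fun x hx => (hdu x hx).continuousWithinAt
  have hu1cont : ContinuousOn u1 (Set.Icc 0 L) := fun x hx => (hdu1 x hx).continuousWithinAt
  have hμcont : ContinuousOn μ (Set.Icc 0 L) := fun x hx => (hdμ x hx).continuousWithinAt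
  -- derivatives at interior points
  have hduI : ∀ x ∈ Set.Ioo (0:ℝ) L, HasDerivAt u (u1 x) x := fun x hx =>
    (hdu x (Set.Ioo_subset_Icc_self hx)).hasDerivAt (Icc_mem_nhds hx.1 hx.2)
  have hdu1I : ∀ x ∈ Set.Ioo (0:ℝ) L, HasDerivAt u1 (u2 x) x := fun x hx =>
    (hdu1 x (Set.Ioo_subset_Icc_self hx)).hasDerivAt (Icc_mem_nhds hx.1 hx.2)
  have hdμI : ∀ x ∈ Set.Ioo (0:ℝ) L, HasDerivAt μ (μ1 x) x := fun x hx =>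
    (hdμ x (Set.Ioo_subset_Icc_self hx)).hasDerivAt (Icc_mem_nhds hx.1 hx.2)
  -- μ1 is a.e. equal to deriv μ on (0,L], hence a.e. strongly measurable
  have haeIoo : ∀ᵐ x ∂(volume.restrict (Set.Ioc (0:ℝ) L)), x ∈ Set.Ioo (0:ℝ) L := by
    have hne : ∀ᵐ x ∂(volume : Measure ℝ), x ≠ L := by
      refine MeasureTheory.ae_iff.mpr ?_
      have : {x : ℝ | ¬ x ≠ L} = {L} := by ext x; simp
      rw [this]; exact measure_singleton L
    filter_upwards [MeasureTheory.ae_restrict_mem measurableSet_Ioc,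
      MeasureTheory.ae_restrict_of_ae hne] with x hx hne'
    exact ⟨hx.1, lt_of_le_of_ne hx.2 hne'⟩
  have hμ1ae : μ1 =ᵐ[volume.restrict (Set.Ioc (0:ℝ) L)] deriv μ := by
    filter_upwards [haeIoo] with x hx
    exact ((hdμI x hx).deriv).symm
  have hμ1meas : AEStronglyMeasurable μ1 (volume.restrict (Set.Ioc (0:ℝ) L)) :=
    (measurable_deriv μ).aestronglyMeasurable.congr hμ1ae.symm
  -- μ1 is interval integrable
  have hintμ1' : IntervalIntegrable μ1 volume 0 L := by
    rw [intervalIntegrable_iff_integrableOn_Ioc_of_le hL0]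
    have hsq : IntegrableOn (fun x => (μ1 x) ^ 2) (Set.Ioc 0 L) volume :=
      (intervalIntegrable_iff_integrableOn_Ioc_of_le hL0).mp hintμ1
    have hg : IntegrableOn (fun x => 1 + (μ1 x) ^ 2) (Set.Ioc 0 L) volume :=
      (integrableOn_const (C := (1:ℝ)) measure_Ioc_lt_top.ne).add hsq
    refine hg.integrable.mono hμ1meas ?_
    refine Filter.Eventually.of_forall fun x => ?_
    have h1 : (0:ℝ) ≤ 1 + μ1 x ^ 2 := by positivity
    rw [Real.norm_eq_abs, Real.norm_eq_abs, abs_of_nonneg h1]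
    nlinarith [sq_nonneg (|μ1 x| - 1), sq_abs (μ1 x), abs_nonneg (μ1 x)]
  have hintμ1abs : IntervalIntegrable (fun x => |μ1 x|) volume 0 L := hintμ1'.abs
  have hintu1 : IntervalIntegrable u1 volume 0 L :=
    (hIcc ▸ hu1cont).intervalIntegrable
  have hintu1abs : IntervalIntegrable (fun x => |u1 x|) volume 0 L := hintu1.abs
  have hintu1sq : IntervalIntegrable (fun x => (u1 x) ^ 2) volume 0 L :=
    (hIcc ▸ (hu1cont.pow 2)).intervalIntegrable
  -- abbreviations
  set I : ℝ := ∫ x in (0:ℝ)..L, (u1 x) ^ 2 with hI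
  set M : ℝ := ∫ x in (0:ℝ)..L, (μ1 x) ^ 2 with hM
  set P : ℝ := ∫ x in (0:ℝ)..L, |μ1 x| with hP
  set Q : ℝ := ∫ x in (0:ℝ)..L, |u1 x| with hQ
  have hInn : 0 ≤ I := intervalIntegral.integral_nonneg hL0 (fun x _ => sq_nonneg _)
  have hMnn : 0 ≤ M := intervalIntegral.integral_nonneg hL0 (fun x _ => sq_nonneg _)
  have hPnn : 0 ≤ P := intervalIntegral.integral_nonneg hL0 (fun x _ => abs_nonneg _)
  have hQnn : 0 ≤ Q := intervalIntegral.integral_nonneg hL0 (fun x _ => abs_nonneg _)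
  -- FTC representations
  have hμrep : ∀ x ∈ Set.Icc (0:ℝ) L, μ x = ∫ t in (0:ℝ)..x, μ1 t := by
    intro x hx
    have hsub : Set.Icc (0:ℝ) x ⊆ Set.Icc 0 L := Set.Icc_subset_Icc le_rfl hx.2
    have := intervalIntegral.integral_eq_sub_of_hasDeriv_right_of_le hx.1
      (hμcont.mono hsub)
      (fun t ht => (hdμI t ⟨ht.1, lt_of_lt_of_le ht.2 hx.2⟩).hasDerivWithinAt)
      (hintμ1'.mono_set (by rw [hIcc, Set.uIcc_of_le hx.1]; exact hsub))
    rw [this, hμ0, sub_zero]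
  have hurep : ∀ x ∈ Set.Icc (0:ℝ) L, u x = ∫ t in (0:ℝ)..x, u1 t := by
    intro x hx
    have hsub : Set.Icc (0:ℝ) x ⊆ Set.Icc 0 L := Set.Icc_subset_Icc le_rfl hx.2
    have := intervalIntegral.integral_eq_sub_of_hasDeriv_right_of_le hx.1
      (hucont.mono hsub)
      (fun t ht => (hduI t ⟨ht.1, lt_of_lt_of_le ht.2 hx.2⟩).hasDerivWithinAt)
      (hintu1.mono_set (by rw [hIcc, Set.uIcc_of_le hx.1]; exact hsub))
    rw [this, hu0, sub_zero]
  -- pointwise bounds |μ x| ≤ P and |u x| ≤ Q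
  have hμbdd : ∀ x ∈ Set.Icc (0:ℝ) L, |μ x| ≤ P := by
    intro x hx
    rw [hμrep x hx]
    calc |∫ t in (0:ℝ)..x, μ1 t| ≤ ∫ t in (0:ℝ)..x, |μ1 t| :=
          intervalIntegral.abs_integral_le_integral_abs hx.1
      _ ≤ P := intervalIntegral.integral_mono_interval le_rfl hx.1 hx.2
          (Filter.Eventually.of_forall fun t => abs_nonneg _) hintμ1abs
  have hubdd : ∀ x ∈ Set.Icc (0:ℝ) L, |u x| ≤ Q := by
    intro x hx
    rw [hurep x hx]
    calc |∫ t in (0:ℝ)..x, u1 t| ≤ ∫ t in (0:ℝ)..x, |u1 t| :=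
          intervalIntegral.abs_integral_le_integral_abs hx.1
      _ ≤ Q := intervalIntegral.integral_mono_interval le_rfl hx.1 hx.2
          (Filter.Eventually.of_forall fun t => abs_nonneg _) hintu1abs
  -- elementary Young inequality
  have key : ∀ a b : ℝ, |a| * |b| ≤ (L ^ 2 * a ^ 2 + b ^ 2 / L ^ 2) / 2 := by
    intro a b
    have h2 : 2 * (L * |a|) * (|b| / L) ≤ (L * |a|) ^ 2 + (|b| / L) ^ 2 :=
      two_mul_le_add_sq _ _
    have hab : 2 * (L * |a|) * (|b| / L) = 2 * (|a| * |b|) := by field_simp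
    have hsq1 : (L * |a|) ^ 2 = L ^ 2 * a ^ 2 := by rw [mul_pow, sq_abs]
    have hsq2 : (|b| / L) ^ 2 = b ^ 2 / L ^ 2 := by rw [div_pow, sq_abs]
    rw [hab, hsq1, hsq2] at h2
    linarith
  -- step 1 : for each x, |μ1 x| * Q ≤ L^3/2 * μ1 x ^ 2 + I / (2 * L ^ 2)
  have hstep1 : ∀ x : ℝ, |μ1 x| * Q ≤ L ^ 3 / 2 * (μ1 x) ^ 2 + I / (2 * L ^ 2) := by
    intro x
    have h1 : |μ1 x| * Q = ∫ y in (0:ℝ)..L, |μ1 x| * |u1 y| := by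
      rw [hQ, ← intervalIntegral.integral_const_mul]
    have h2 : (∫ y in (0:ℝ)..L, |μ1 x| * |u1 y|)
        ≤ ∫ y in (0:ℝ)..L, (L ^ 2 * (μ1 x) ^ 2 / 2 + (u1 y) ^ 2 / (L ^ 2 * 2)) := by
      apply intervalIntegral.integral_mono_on hL0
        (hintu1abs.const_mul _)
        ((_root_.intervalIntegrable_const).add (hintu1sq.div_const _))
      intro y _
      have hk := key (μ1 x) (u1 y)
      have hdd : (u1 y) ^ 2 / L ^ 2 / 2 = (u1 y) ^ 2 / (L ^ 2 * 2) := div_div _ _ _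
      linarith
    have h3 : (∫ y in (0:ℝ)..L, (L ^ 2 * (μ1 x) ^ 2 / 2 + (u1 y) ^ 2 / (L ^ 2 * 2)))
        = L * (L ^ 2 * (μ1 x) ^ 2 / 2) + (∫ y in (0:ℝ)..L, (u1 y) ^ 2) / (L ^ 2 * 2) := by
      rw [intervalIntegral.integral_add _root_.intervalIntegrable_const (hintu1sq.div_const _),
        intervalIntegral.integral_const, intervalIntegral.integral_div]
      simp only [smul_eq_mul, sub_zero]
    rw [h1]
    refine h2.trans (le_of_eq ?_)
    rw [h3, ← hI]
    field_simp
  -- step 2 : P * Q ≤ L^3/2 * M + I / (2 * L)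
  have hstep2 : P * Q ≤ L ^ 3 / 2 * M + I / (2 * L) := by
    have h1 : P * Q = ∫ x in (0:ℝ)..L, |μ1 x| * Q := by
      rw [hP, ← intervalIntegral.integral_mul_const]
    have h2 : (∫ x in (0:ℝ)..L, |μ1 x| * Q)
        ≤ ∫ x in (0:ℝ)..L, (L ^ 3 / 2 * (μ1 x) ^ 2 + I / (2 * L ^ 2)) := by
      apply intervalIntegral.integral_mono_on hL0
        (hintμ1abs.mul_const _)
        ((hintμ1.const_mul _).add _root_.intervalIntegrable_const)
      intro x _
      exact hstep1 x
    have h3 : (∫ x in (0:ℝ)..L, (L ^ 3 / 2 * (μ1 x) ^ 2 + I / (2 * L ^ 2)))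
        = L ^ 3 / 2 * M + L * (I / (2 * L ^ 2)) := by
      rw [intervalIntegral.integral_add (hintμ1.const_mul _) _root_.intervalIntegrable_const,
        intervalIntegral.integral_const_mul, intervalIntegral.integral_const]
      simp only [smul_eq_mul, sub_zero, hM]
    have h4 : L * (I / (2 * L ^ 2)) = I / (2 * L) := by
      field_simp
    rw [h1]
    exact h2.trans (le_of_eq (by rw [h3, h4]))
  -- the integral A = ∫ μ u is bounded
  have hA : (∫ x in (0:ℝ)..L, μ x * u x) ≤ L ^ 4 / 2 * M + I / 2 := by
    have h1 : (∫ x in (0:ℝ)..L, μ x * u x) ≤ ∫ x in (0:ℝ)..L, P * Q := by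
      apply intervalIntegral.integral_mono_on hL0
        ((hIcc ▸ (hμcont.mul hucont)).intervalIntegrable)
        _root_.intervalIntegrable_const
      intro x hx
      calc μ x * u x ≤ |μ x * u x| := le_abs_self _
        _ = |μ x| * |u x| := abs_mul _ _
        _ ≤ P * Q := mul_le_mul (hμbdd x hx) (hubdd x hx) (abs_nonneg _) hPnn
    have h2 : (∫ x in (0:ℝ)..L, P * Q) = L * (P * Q) := by
      rw [intervalIntegral.integral_const]; simp
    have h3 : L * (P * Q) ≤ L * (L ^ 3 / 2 * M + I / (2 * L)) :=
      mul_le_mul_of_nonneg_left hstep2 hL0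
    have h4 : L * (L ^ 3 / 2 * M + I / (2 * L)) = L ^ 4 / 2 * M + I / 2 := by
      field_simp
    calc (∫ x in (0:ℝ)..L, μ x * u x) ≤ ∫ x in (0:ℝ)..L, P * Q := h1
      _ = L * (P * Q) := h2
      _ ≤ L ^ 4 / 2 * M + I / 2 := by rw [← h4] at *; exact h3
  -- integration by parts : ∫ u2 u = -I
  have hibp : (∫ x in (0:ℝ)..L, u2 x * u x) = -I := by
    have hint1 : IntervalIntegrable (fun x => u2 x * u x + u1 x * u1 x) volume 0 L :=
      (hIcc ▸ ((hu2cont.mul hucont).add (hu1cont.mul hu1cont))).intervalIntegrable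
    have hftc : (∫ x in (0:ℝ)..L, (u2 x * u x + u1 x * u1 x))
        = u1 L * u L - u1 0 * u 0 :=
      intervalIntegral.integral_eq_sub_of_hasDeriv_right_of_le hL0
        (hu1cont.mul hucont)
        (fun t ht => ((hdu1I t ht).mul (hduI t ht)).hasDerivWithinAt)
        hint1
    rw [hu1L, hu0, zero_mul, mul_zero, sub_zero] at hftc
    have hadd : (∫ x in (0:ℝ)..L, (u2 x * u x + u1 x * u1 x))
        = (∫ x in (0:ℝ)..L, u2 x * u x) + ∫ x in (0:ℝ)..L, u1 x * u1 x := by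
      apply intervalIntegral.integral_add
        ((hIcc ▸ (hu2cont.mul hucont)).intervalIntegrable)
        ((hIcc ▸ (hu1cont.mul hu1cont)).intervalIntegrable)
    have hsq : (∫ x in (0:ℝ)..L, u1 x * u1 x) = I := by
      rw [hI]; congr 1; funext x; ring
    rw [hadd, hsq] at hftc
    linarith
  -- continuity of x ↦ W x (u x)
  have hWcont : ContinuousOn (fun x => W x (u x)) (Set.Icc 0 L) := by
    have hpair : ContinuousOn (fun x : ℝ => (x, u x)) (Set.Icc 0 L) :=
      (continuousOn_id).prodMk hucont
    exact hW.continuous.comp_continuousOn hpair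
  -- bound on ∫ W(x, u x)
  have hWbound : (∫ x in (0:ℝ)..L, W x (u x))
      ≤ (∫ x in (0:ℝ)..L, μ x * u x) + (∫ x in (0:ℝ)..L, u2 x * u x) + K₁ * L := by
    have h1 : (∫ x in (0:ℝ)..L, W x (u x))
        ≤ ∫ x in (0:ℝ)..L, (μ x * u x + u2 x * u x + K₁) := by
      apply intervalIntegral.integral_mono_on hL0
        ((hIcc ▸ hWcont).intervalIntegrable)
        ((hIcc ▸ (((hμcont.mul hucont).add (hu2cont.mul hucont)).add
          continuousOn_const)).intervalIntegrable)
      intro x hx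
      have h2 := hWstr x (u x)
      have h3 : Ws x (u x) = μ x + u2 x := by
        have := hμdef x hx; linarith
      have h4 : Ws x (u x) * u x = μ x * u x + u2 x * u x := by
        rw [h3]; ring
      linarith
    have h5 : (∫ x in (0:ℝ)..L, (μ x * u x + u2 x * u x + K₁))
        = (∫ x in (0:ℝ)..L, μ x * u x) + (∫ x in (0:ℝ)..L, u2 x * u x) + K₁ * L := by
      rw [intervalIntegral.integral_add
          ((hIcc ▸ ((hμcont.mul hucont).add (hu2cont.mul hucont))).intervalIntegrable)
          _root_.intervalIntegrable_const,
        intervalIntegral.integral_add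
          ((hIcc ▸ (hμcont.mul hucont)).intervalIntegrable)
          ((hIcc ▸ (hu2cont.mul hucont)).intervalIntegrable),
        intervalIntegral.integral_const]
      simp only [smul_eq_mul, sub_zero]
      ring
    rw [← h5]; exact h1
  -- conclusion
  rw [hibp] at hWbound
  linarith
end
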